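/- Let f : ℝ → ℝ be continuously differentiable with f(0) ≤ 0, satisfying (rQFC) for every λ ≥ 0 with f(λ) = 0 one has deriv f λ ≤ 0, and (genericity) whenever f(λ*) = 0 and deriv f λ* = 0 for some λ* ≥ 0, there exists ε > 0 such that f vanishes identically on [λ*, λ* + ε). Let S : ℝ → ℝ be differentiable with deriv S λ = c(λ) · f(λ) for all λ ≥ 0, where c : ℝ → ℝ satisfies c(λ) > 0 for all λ ≥ 0. Then S is antitone on [0, ∞): for all 0 ≤ λ₁ ≤ λ₂ one has S(λ₂) ≤ S(λ₁). -/

import Mathlib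

/-- The generalized second law from rQFC: the generalized entropy `S`, whose derivative is
a positive multiple of the quantum expansion `f`, is antitone on `[0, ∞)`. -/
theorem gsl_from_rQFC
    (f : ℝ → ℝ) (hf : ContDiff ℝ 1 f) (h0 : f 0 ≤ 0)
    (rQFC : ∀ l : ℝ, 0 ≤ l → f l = 0 → deriv f l ≤ 0)
    (genericity : ∀ l : ℝ, 0 ≤ l → f l = 0 → deriv f l = 0 →
      ∃ ε > 0, ∀ l' ∈ Set.Ico l (l + ε), f l' = 0)
    (S c : ℝ → ℝ) (hS : Differentiable ℝ S)
    (hSderiv : ∀ l : ℝ, 0 ≤ l → deriv S l = c l * f l)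
    (hc : ∀ l : ℝ, 0 ≤ l → 0 < c l) :
    ∀ l₁ l₂ : ℝ, 0 ≤ l₁ → l₁ ≤ l₂ → S l₂ ≤ S l₁ := by
  have hfc : Continuous f := hf.continuous
  have hfd : Differentiable ℝ f := hf.differentiable one_ne_zero
  -- Key: f ≤ 0 on [0, ∞)
  have key : ∀ l : ℝ, 0 ≤ l → f l ≤ 0 := by
    intro b hb
    by_contra hpos
    push_neg at hpos
    set A : Set ℝ := {x ∈ Set.Icc (0:ℝ) b | f x ≤ 0} with hA
    have hA0 : (0:ℝ) ∈ A := ⟨⟨le_rfl, hb⟩, h0⟩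
    have hAne : A.Nonempty := ⟨0, hA0⟩
    have hAbdd : BddAbove A := ⟨b, fun x hx => hx.1.2⟩
    set m := sSup A with hm
    have hAclosed : IsClosed A := by
      have : A = Set.Icc (0:ℝ) b ∩ f ⁻¹' Set.Iic 0 := by
        ext x; simp [hA, Set.mem_setOf_eq, and_comm]
      rw [this]
      exact isClosed_Icc.inter (isClosed_Iic.preimage hfc)
    have hmA : m ∈ A := hAclosed.csSup_mem hAne hAbdd
    have hm0 : 0 ≤ m := hmA.1.1
    have hmb : m ≤ b := hmA.1.2
    have hmlt : m < b := lt_of_le_of_ne hmb fun h => absurd hmA.2 (by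
      rw [h]; exact not_le.mpr hpos)
    have hgt : ∀ x, x ∈ Set.Ioc m b → 0 < f x := by
      intro x hx
      by_contra hle
      push_neg at hle
      have : x ∈ A := ⟨⟨hm0.trans hx.1.le, hx.2⟩, hle⟩
      exact absurd (le_csSup hAbdd this) (not_le.mpr hx.1)
    have hfm : f m = 0 := by
      rcases lt_trichotomy (f m) 0 with h | h | h
      · obtain ⟨x, hx, hfx⟩ := intermediate_value_Ioo hmlt.le hfc.continuousOn
          (Set.mem_Ioo.mpr ⟨h, hpos⟩)
        exact absurd hfx (ne_of_gt (hgt x ⟨hx.1, hx.2.le⟩))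
      · exact h
      · exact absurd hmA.2 (not_le.mpr h)
    -- derivative at m is ≥ 0 (right difference quotients positive)
    have hder : HasDerivAt f (deriv f m) m := hfd.differentiableAt.hasDerivAt
    have hderW : HasDerivWithinAt f (deriv f m) (Set.Ioi m) m := hder.hasDerivWithinAt
    have hslope := hasDerivWithinAt_iff_tendsto_slope.mp hderW
    have hself : m ∉ Set.Ioi m := by simp
    rw [Set.diff_singleton_eq_self hself] at hslope
    have hge : 0 ≤ deriv f m := by
      refine ge_of_tendsto hslope ?_
      filter_upwards [Ioc_mem_nhdsGT_of_mem ⟨le_rfl, hmlt⟩] with x hx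
      have h1 : 0 < f x := hgt x hx
      have h2 : 0 < x - m := sub_pos.mpr hx.1
      rw [slope_def_field, hfm, sub_zero]
      positivity
    have hle := rQFC m hm0 hfm
    have hd0 : deriv f m = 0 := le_antisymm hle hge
    obtain ⟨ε, hε, hzero⟩ := genericity m hm0 hfm hd0
    set x := m + min ε (b - m) / 2 with hx
    have hxmin : 0 < min ε (b - m) := lt_min hε (sub_pos.mpr hmlt)
    have hx1 : m < x := by rw [hx]; linarith
    have hx2 : x ≤ b := by
      have : min ε (b - m) / 2 ≤ (b - m) := by
        have := min_le_right ε (b - m); linarith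
      simp [hx]; linarith
    have hx3 : x < m + ε := by
      have : min ε (b - m) / 2 < ε := by
        have := min_le_left ε (b - m); linarith
      simp [hx]; linarith
    have := hzero x ⟨hx1.le, hx3⟩
    exact absurd this (ne_of_gt (hgt x ⟨hx1, hx2⟩))
  -- now conclude antitonicity
  intro l₁ l₂ hl₁ hl
  have hanti : AntitoneOn S (Set.Ici (0:ℝ)) := by
    apply antitoneOn_of_deriv_nonpos (convex_Ici 0) hS.continuous.continuousOn
      (hS.differentiableOn)
    intro x hx
    rw [interior_Ici] at hx
    have hx0 : (0:ℝ) ≤ x := le_of_lt hx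
    rw [hSderiv x hx0]
    exact mul_nonpos_of_nonneg_of_nonpos (hc x hx0).le (key x hx0)
  exact hanti (Set.mem_Ici.mpr hl₁) (Set.mem_Ici.mpr (hl₁.trans hl)) hl
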